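/- (Section 5, intermediate claims) Let α = (a_1,…,a_{k-1}) ∈ L_1 and β = (a_2,…,a_k) ∈ L_{k+1}, and let P be a directed path in G from α to β. If P contains the vertex u or the vertex v, or if P contains a ba-type back edge, then the length of P is at least 2k-1. -/

import Mathlib

namespace DiamLB

/-! ## Generic directed-graph notions -/

/-- There is a directed walk of length `n` from `a` to `b`. -/
def HasWalkLen {V : Type*} (Adj : V → V → Prop) : ℕ → V → V → Prop
  | 0, a, b => a = b
  | n + 1, a, b => ∃ c, Adj a c ∧ HasWalkLen Adj n c b

/-- `P 0, P 1, …, P n` is a directed walk. -/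
def IsWalk {V : Type*} (Adj : V → V → Prop) (P : ℕ → V) (n : ℕ) : Prop :=
  ∀ t, t < n → Adj (P t) (P (t + 1))

/-- The shortest-path distance from `a` to `b` is at most `m`. -/
def DistLE {V : Type*} (Adj : V → V → Prop) (a b : V) (m : ℕ) : Prop :=
  ∃ n ≤ m, HasWalkLen Adj n a b

/-! ## The construction (Section 3, `k ≥ 5`) -/

/-- Boolean vectors of length `d`, i.e. elements of `{0,1}^d`. -/
abbrev Vec (d : ℕ) := Fin d → Bool

/-- The all-ones vector. -/
def ones (d : ℕ) : Vec d := fun _ => true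

/-- Tags naming the layers of the construction. -/
inductive Tag : Type
  | L (i : ℕ)
  | L' (i : ℕ)
  | A (i : ℕ)
  | B (i : ℕ)

/-- Potential vertices of the construction: a tagged partial tuple of vectors
(position `j : Fin k` holding the vector with 1-based index `j+1`) together with a
coordinate array `x` (1-based entry `x_ℓ` at position `ℓ-1 : Fin (k-1)`), plus the two
special vertices `uu` (the vertex `u`) and `vv` (the vertex `v`).  Vertices carrying no
coordinate array in the paper are modelled with the all-zero coordinate array. -/
inductive Vert (k d : ℕ) : Type
  | node (tag : Tag) (p : Fin k → Option (Vec d)) (x : Fin (k - 1) → Fin d) : Vert k d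
  | uu : Vert k d
  | vv : Vert k d

/-- The positions (0-based) satisfying `F` are filled by vectors of `S`, and the other
positions are empty. -/
def FillsS (k d : ℕ) (S : Finset (Vec d)) (F : ℕ → Prop) (p : Fin k → Option (Vec d)) :
    Prop :=
  ∀ j : Fin k, (F (j : ℕ) → ∃ a ∈ S, p j = some a) ∧ (¬ F (j : ℕ) → p j = none)

/-- The dummy (all-zero) coordinate array, used for vertices that carry no coordinate
array in the paper. -/
def ZeroX (k d : ℕ) (x : Fin (k - 1) → Fin d) : Prop :=
  ∀ ℓ, (x ℓ : ℕ) = 0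

/-- The compatibility condition between the vector tuple and the coordinate array of a
vertex of `L_i` (Table 1): for `1 ≤ j ≤ k-i` (the `a_j`), `a_j[x_ℓ] = 1` for all
`1 ≤ ℓ ≤ k-j`, and for `k-i+3 ≤ j ≤ k` (the `b_j`), `b_j[x_ℓ] = 1` for all
`k-j+1 ≤ ℓ ≤ k-1`.  (Everything is 0-based here: position `j` holds the vector with
1-based index `j+1`, and `x ℓ` is the 1-based coordinate `x_{ℓ+1}`.) -/
def BitCond (k d : ℕ) (i : ℕ) (p : Fin k → Option (Vec d)) (x : Fin (k - 1) → Fin d) :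
    Prop :=
  (∀ j : Fin k, (j : ℕ) < k - i → ∀ w, p j = some w →
    ∀ ℓ : Fin (k - 1), (ℓ : ℕ) < k - ((j : ℕ) + 1) → w (x ℓ) = true) ∧
  (∀ j : Fin k, k - i + 2 ≤ (j : ℕ) → ∀ w, p j = some w →
    ∀ ℓ : Fin (k - 1), k - ((j : ℕ) + 1) ≤ (ℓ : ℕ) → w (x ℓ) = true)

/-- The layer `L_i`, for `i = 1, …, k+1`. -/
def setL (k d : ℕ) (S : Finset (Vec d)) (i : ℕ) : Set (Vert k d) :=
  { w | ∃ p x, w = Vert.node (Tag.L i) p x ∧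
      ((i = 1 ∧ FillsS k d S (fun j => j < k - 1) p ∧ ZeroX k d x) ∨
       (i = k + 1 ∧ FillsS k d S (fun j => 1 ≤ j) p ∧ ZeroX k d x) ∨
       (2 ≤ i ∧ i ≤ k ∧ FillsS k d S (fun j => j < k - i ∨ k - i + 2 ≤ j) p ∧
         BitCond k d i p x)) }

/-- The layer `L'_i`, for `i = 3, …, k-1`: same vector tuples as `L_i` but with an
arbitrary coordinate array. -/
def setL' (k d : ℕ) (S : Finset (Vec d)) (i : ℕ) : Set (Vert k d) :=
  { w | ∃ p x, w = Vert.node (Tag.L' i) p x ∧ 3 ≤ i ∧ i ≤ k - 1 ∧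
      FillsS k d S (fun j => j < k - i ∨ k - i + 2 ≤ j) p }

/-- The set `A_i`, for `i = 4, …, k-1`: tuples `(a_1, …, a_{k-i})`. -/
def setA (k d : ℕ) (S : Finset (Vec d)) (i : ℕ) : Set (Vert k d) :=
  { w | ∃ p x, w = Vert.node (Tag.A i) p x ∧ 4 ≤ i ∧ i ≤ k - 1 ∧
      FillsS k d S (fun j => j < k - i) p ∧ ZeroX k d x }

/-- The set `B_i`, for `i = 3, …, k-2`: tuples `(b_{k-i+3}, …, b_k)`. -/
def setB (k d : ℕ) (S : Finset (Vec d)) (i : ℕ) : Set (Vert k d) :=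
  { w | ∃ p x, w = Vert.node (Tag.B i) p x ∧ 3 ≤ i ∧ i ≤ k - 2 ∧
      FillsS k d S (fun j => k - i + 2 ≤ j) p ∧ ZeroX k d x }

/-- `L = ∪_i L_i`. -/
def setLall (k d : ℕ) (S : Finset (Vec d)) : Set (Vert k d) := ⋃ i, setL k d S i

/-- `L' = ∪_i L'_i`. -/
def setL'all (k d : ℕ) (S : Finset (Vec d)) : Set (Vert k d) := ⋃ i, setL' k d S i

/-- `A = ∪_i A_i`. -/
def setAall (k d : ℕ) (S : Finset (Vec d)) : Set (Vert k d) := ⋃ i, setA k d S i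

/-- `B = ∪_i B_i`. -/
def setBall (k d : ℕ) (S : Finset (Vec d)) : Set (Vert k d) := ⋃ i, setB k d S i

/-- Level `i` is `L_i ∪ L'_i ∪ A_i ∪ B_i`. -/
def level (k d : ℕ) (S : Finset (Vec d)) (i : ℕ) : Set (Vert k d) :=
  setL k d S i ∪ setL' k d S i ∪ setA k d S i ∪ setB k d S i

/-- The vertex set of the graph `G`. -/
def VertexSet (k d : ℕ) (S : Finset (Vec d)) : Set (Vert k d) :=
  setLall k d S ∪ setL'all k d S ∪ setAall k d S ∪ setBall k d S ∪ {Vert.uu, Vert.vv}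

/-! ### Edges -/

/-- One orientation of the (undirected) swap edges.  Between `L_i` and `L_{i+1}`
(`2 ≤ i ≤ k-1`) the vector `a_{k-i}` (0-based position `k-i-1`) is exchanged for the
vector `b_{k-i+2}` (0-based position `k-i+1`), keeping the coordinate array; between
`L_1` and `L_2` the vector `a_{k-1}` is exchanged for a coordinate array; between
`L_{k+1}` and `L_k` the vector `b_2` is exchanged for a coordinate array. -/
def SwapE (k d : ℕ) (S : Finset (Vec d)) (α β : Vert k d) : Prop :=
  (∃ i p x p' x', 2 ≤ i ∧ i ≤ k - 1 ∧
      α = Vert.node (Tag.L i) p x ∧ β = Vert.node (Tag.L (i + 1)) p' x' ∧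
      α ∈ setL k d S i ∧ β ∈ setL k d S (i + 1) ∧ x' = x ∧
      (∀ j : Fin k, (j : ℕ) ≠ k - i - 1 → (j : ℕ) ≠ k - i + 1 → p' j = p j)) ∨
  (∃ p x p' x',
      α = Vert.node (Tag.L 1) p x ∧ β = Vert.node (Tag.L 2) p' x' ∧
      α ∈ setL k d S 1 ∧ β ∈ setL k d S 2 ∧
      (∀ j : Fin k, (j : ℕ) ≠ k - 2 → p' j = p j)) ∨
  (∃ p x p' x',
      α = Vert.node (Tag.L (k + 1)) p x ∧ β = Vert.node (Tag.L k) p' x' ∧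
      α ∈ setL k d S (k + 1) ∧ β ∈ setL k d S k ∧
      (∀ j : Fin k, (j : ℕ) ≠ 1 → p' j = p j))

/-- One orientation of the (undirected) vector-change edges between `L_i` and `L'_i`
(`3 ≤ i ≤ k-1`): same coordinate array, same vectors except possibly one of `a_{k-i}`
(position `k-i-1`) or `b_{k-i+3}` (position `k-i+2`). -/
def VecE (k d : ℕ) (S : Finset (Vec d)) (α β : Vert k d) : Prop :=
  ∃ i p x p' x', 3 ≤ i ∧ i ≤ k - 1 ∧
    α = Vert.node (Tag.L i) p x ∧ β = Vert.node (Tag.L' i) p' x' ∧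
    α ∈ setL k d S i ∧ β ∈ setL' k d S i ∧ x' = x ∧
    ((∀ j : Fin k, (j : ℕ) ≠ k - i - 1 → p' j = p j) ∨
     (∀ j : Fin k, (j : ℕ) ≠ k - i + 2 → p' j = p j))

/-- The (undirected, symmetric as stated) coordinate-change edges: two distinct
vertices with the same vector tuple, within each `L'_i`, between `L'_i` and `L_i`,
within `L_2` and within `L_k`. -/
def CoordE (k d : ℕ) (S : Finset (Vec d)) (α β : Vert k d) : Prop :=
  ∃ t t' p x x', α = Vert.node t p x ∧ β = Vert.node t' p x' ∧ α ≠ β ∧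
    ((∃ i, α ∈ setL' k d S i ∧ β ∈ setL' k d S i) ∨
     (∃ i, α ∈ setL' k d S i ∧ β ∈ setL k d S i) ∨
     (∃ i, α ∈ setL k d S i ∧ β ∈ setL' k d S i) ∨
     (α ∈ setL k d S 2 ∧ β ∈ setL k d S 2) ∨
     (α ∈ setL k d S k ∧ β ∈ setL k d S k))

/-- The directed `a`-type back edges: from `L_i ∪ L'_i` to the matching prefix in `A_i`;
from `A_i` to every vertex of `L'_4` with the matching prefix; and from `A_{k-1}`
to every vertex of `A_i` with the same first vector `a_1`. -/
def ABack (k d : ℕ) (S : Finset (Vec d)) (α β : Vert k d) : Prop :=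
  (∃ i t p x p' x', (α ∈ setL k d S i ∨ α ∈ setL' k d S i) ∧ β ∈ setA k d S i ∧
      α = Vert.node t p x ∧ β = Vert.node (Tag.A i) p' x' ∧
      (∀ j : Fin k, (j : ℕ) < k - i → p' j = p j)) ∨
  (∃ i p x p' x', α ∈ setA k d S i ∧ β ∈ setL' k d S 4 ∧
      α = Vert.node (Tag.A i) p x ∧ β = Vert.node (Tag.L' 4) p' x' ∧
      (∀ j : Fin k, (j : ℕ) < k - i → p' j = p j)) ∨
  (∃ i p x p' x', α ∈ setA k d S (k - 1) ∧ β ∈ setA k d S i ∧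
      α = Vert.node (Tag.A (k - 1)) p x ∧ β = Vert.node (Tag.A i) p' x' ∧
      (∀ j : Fin k, (j : ℕ) = 0 → p' j = p j))

/-- The directed `b`-type back edges: from `B_i` to every vertex of `L_i ∪ L'_i` with
the matching suffix; from every vertex of `L'_{k-2}` to the vertex of `B_i` with the
matching suffix; and from `B_i` to the vertex of `B_3` with the same last vector. -/
def BBack (k d : ℕ) (S : Finset (Vec d)) (α β : Vert k d) : Prop :=
  (∃ i t p x p' x', α ∈ setB k d S i ∧ (β ∈ setL k d S i ∨ β ∈ setL' k d S i) ∧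
      α = Vert.node (Tag.B i) p x ∧ β = Vert.node t p' x' ∧
      (∀ j : Fin k, k - i + 2 ≤ (j : ℕ) → p j = p' j)) ∨
  (∃ i p x p' x', α ∈ setL' k d S (k - 2) ∧ β ∈ setB k d S i ∧
      α = Vert.node (Tag.L' (k - 2)) p x ∧ β = Vert.node (Tag.B i) p' x' ∧
      (∀ j : Fin k, k - i + 2 ≤ (j : ℕ) → p' j = p j)) ∨
  (∃ i p x p' x', α ∈ setB k d S i ∧ β ∈ setB k d S 3 ∧
      α = Vert.node (Tag.B i) p x ∧ β = Vert.node (Tag.B 3) p' x' ∧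
      (∀ j : Fin k, (j : ℕ) = k - 1 → p' j = p j))

/-- The directed `ba`-type back edges: from every vertex of `B_i` to every vertex of
`A_i`, for `4 ≤ i ≤ k-2`. -/
def BABack (k d : ℕ) (S : Finset (Vec d)) (α β : Vert k d) : Prop :=
  ∃ i, 4 ≤ i ∧ i ≤ k - 2 ∧ α ∈ setB k d S i ∧ β ∈ setA k d S i

/-- The directed fixed edges: `L'_{k-2} → v`, `v → L_1 ∪ L_2`, `L_k ∪ L_{k+1} → u`,
and `u → L'_4`. -/
def FixedE (k d : ℕ) (S : Finset (Vec d)) (α β : Vert k d) : Prop :=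
  (α ∈ setL' k d S (k - 2) ∧ β = Vert.vv) ∨
  (α = Vert.vv ∧ (β ∈ setL k d S 1 ∨ β ∈ setL k d S 2)) ∨
  ((α ∈ setL k d S k ∨ α ∈ setL k d S (k + 1)) ∧ β = Vert.uu) ∨
  (α = Vert.uu ∧ β ∈ setL' k d S 4)

/-- The adjacency relation of the graph `G` (undirected edges appear in both
directions). -/
def Adj (k d : ℕ) (S : Finset (Vec d)) (α β : Vert k d) : Prop :=
  SwapE k d S α β ∨ SwapE k d S β α ∨ VecE k d S α β ∨ VecE k d S β α ∨
  CoordE k d S α β ∨ ABack k d S α β ∨ BBack k d S α β ∨ BABack k d S α β ∨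
  FixedE k d S α β

/-! ### Loops and covers (Section 5) -/

/-- `t` is the first time at which the walk `P` (of length `n`) visits `L_i`. -/
def FirstVisit (k d : ℕ) (S : Finset (Vec d)) (P : ℕ → Vert k d) (n i t : ℕ) : Prop :=
  t ≤ n ∧ P t ∈ setL k d S i ∧ ∀ s, s < t → P s ∉ setL k d S i

/-- `t` is the last time at which the walk `P` (of length `n`) visits `L_i`. -/
def LastVisit (k d : ℕ) (S : Finset (Vec d)) (P : ℕ → Vert k d) (n i t : ℕ) : Prop :=
  t ≤ n ∧ P t ∈ setL k d S i ∧ ∀ s, t < s → s ≤ n → P s ∉ setL k d S i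

/-- The layer `L_i` is in a loop: the walk `P` visits `L_i` at least twice. -/
def InLoop (k d : ℕ) (S : Finset (Vec d)) (P : ℕ → Vert k d) (n i : ℕ) : Prop :=
  ∃ t1 t2, t1 < t2 ∧ t2 ≤ n ∧ P t1 ∈ setL k d S i ∧ P t2 ∈ setL k d S i

/-- The walk `P` visits `A`. -/
def VisitsA (k d : ℕ) (S : Finset (Vec d)) (P : ℕ → Vert k d) (n : ℕ) : Prop :=
  ∃ t ≤ n, P t ∈ setAall k d S

/-- The walk `P` visits `B`. -/
def VisitsB (k d : ℕ) (S : Finset (Vec d)) (P : ℕ → Vert k d) (n : ℕ) : Prop :=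
  ∃ t ≤ n, P t ∈ setBall k d S

/-- The layer `L_i` covers the layer `L_m` (with respect to the walk `P` of length `n`):
for `3 ≤ i ≤ k-1`, `L_i` covers `L_{i-1}` if `L_{i-1}` is not in a loop, `L_i` is in a
loop, and the first and last vertices of `P` in `L_i` differ in the vector `b_{k-i+3}`
(0-based position `k-i+2`) and in the coordinate array; symmetrically `L_i` covers
`L_{i+1}` using the vector `a_{k-i}` (0-based position `k-i-1`).  Additionally `L_4`
covers both `L_3` and `L_2` if `P` visits `A`, and `L_{k-2}` covers both `L_{k-1}` and
`L_k` if `P` visits `B`. -/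
def Covers (k d : ℕ) (S : Finset (Vec d)) (P : ℕ → Vert k d) (n : ℕ) (i m : ℕ) : Prop :=
  (3 ≤ i ∧ i ≤ k - 1 ∧ m + 1 = i ∧ ¬ InLoop k d S P n m ∧ InLoop k d S P n i ∧
    ∃ t1 t2 p1 x1 p2 x2, FirstVisit k d S P n i t1 ∧ LastVisit k d S P n i t2 ∧
      P t1 = Vert.node (Tag.L i) p1 x1 ∧ P t2 = Vert.node (Tag.L i) p2 x2 ∧
      (∀ j : Fin k, (j : ℕ) = k - i + 2 → p1 j ≠ p2 j) ∧ x1 ≠ x2) ∨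
  (3 ≤ i ∧ i ≤ k - 1 ∧ m = i + 1 ∧ ¬ InLoop k d S P n m ∧ InLoop k d S P n i ∧
    ∃ t1 t2 p1 x1 p2 x2, FirstVisit k d S P n i t1 ∧ LastVisit k d S P n i t2 ∧
      P t1 = Vert.node (Tag.L i) p1 x1 ∧ P t2 = Vert.node (Tag.L i) p2 x2 ∧
      (∀ j : Fin k, (j : ℕ) = k - i - 1 → p1 j ≠ p2 j) ∧ x1 ≠ x2) ∨
  (i = 4 ∧ (m = 3 ∨ m = 2) ∧ VisitsA k d S P n) ∨
  (i = k - 2 ∧ (m = k - 1 ∨ m = k) ∧ VisitsB k d S P n)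


/-! ### Auxiliary machinery for Statement 18 -/

/-- The potential function used to bound path lengths. -/
def fpot (k d : ℕ) : Vert k d → ℕ
  | Vert.node (Tag.L i) _ _ => 4 * i
  | Vert.node (Tag.L' i) _ _ => 4 * i - 2
  | Vert.node (Tag.A i) _ _ => 4 * i
  | Vert.node (Tag.B i) _ _ => 4 * i - 4
  | Vert.uu => 4 * k + 4
  | Vert.vv => 4

lemma memL_ex {k d : ℕ} {S : Finset (Vec d)} {i : ℕ} {w : Vert k d}
    (h : w ∈ setL k d S i) : ∃ p x, w = Vert.node (Tag.L i) p x := by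
  obtain ⟨p, x, hw, -⟩ := h; exact ⟨p, x, hw⟩

lemma memL'_ex {k d : ℕ} {S : Finset (Vec d)} {i : ℕ} {w : Vert k d}
    (h : w ∈ setL' k d S i) : ∃ p x, w = Vert.node (Tag.L' i) p x := by
  obtain ⟨p, x, hw, -⟩ := h; exact ⟨p, x, hw⟩

lemma memA_ex {k d : ℕ} {S : Finset (Vec d)} {i : ℕ} {w : Vert k d}
    (h : w ∈ setA k d S i) : ∃ p x, w = Vert.node (Tag.A i) p x := by
  obtain ⟨p, x, hw, -⟩ := h; exact ⟨p, x, hw⟩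

lemma memB_ex {k d : ℕ} {S : Finset (Vec d)} {i : ℕ} {w : Vert k d}
    (h : w ∈ setB k d S i) : ∃ p x, w = Vert.node (Tag.B i) p x := by
  obtain ⟨p, x, hw, -⟩ := h; exact ⟨p, x, hw⟩

lemma memA_bounds {k d : ℕ} {S : Finset (Vec d)} {i : ℕ} {w : Vert k d}
    (h : w ∈ setA k d S i) : 4 ≤ i ∧ i ≤ k - 1 := by
  obtain ⟨p, x, -, h1, h2, -⟩ := h; exact ⟨h1, h2⟩

lemma memB_bounds {k d : ℕ} {S : Finset (Vec d)} {i : ℕ} {w : Vert k d}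
    (h : w ∈ setB k d S i) : 3 ≤ i ∧ i ≤ k - 2 := by
  obtain ⟨p, x, -, h1, h2, -⟩ := h; exact ⟨h1, h2⟩

/-- Every edge of `G` increases the potential by at most 4. -/
lemma fstep {k d : ℕ} {S : Finset (Vec d)} (hk : 5 ≤ k) {α β : Vert k d}
    (h : Adj k d S α β) : fpot k d β ≤ fpot k d α + 4 := by
  rcases h with h | h | h | h | h | h | h | h | h
  · -- SwapE α β
    rcases h with ⟨i, p, x, p', x', -, -, rfl, rfl, -⟩ |
      ⟨p, x, p', x', rfl, rfl, -⟩ | ⟨p, x, p', x', rfl, rfl, -⟩ <;>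
      simp only [fpot] <;> omega
  · -- SwapE β α
    rcases h with ⟨i, p, x, p', x', -, -, rfl, rfl, -⟩ |
      ⟨p, x, p', x', rfl, rfl, -⟩ | ⟨p, x, p', x', rfl, rfl, -⟩ <;>
      simp only [fpot] <;> omega
  · -- VecE α β
    obtain ⟨i, p, x, p', x', -, -, rfl, rfl, -⟩ := h
    simp only [fpot]; omega
  · -- VecE β α
    obtain ⟨i, p, x, p', x', -, -, rfl, rfl, -⟩ := h
    simp only [fpot]; omega
  · -- CoordE
    obtain ⟨t, t', p, x, x', rfl, rfl, -, hd⟩ := h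
    rcases hd with ⟨i, h1, h2⟩ | ⟨i, h1, h2⟩ | ⟨i, h1, h2⟩ | ⟨h1, h2⟩ | ⟨h1, h2⟩
    · obtain ⟨p1, x1, e1⟩ := memL'_ex h1
      obtain ⟨p2, x2, e2⟩ := memL'_ex h2
      rw [e1, e2]; simp only [fpot]; omega
    · obtain ⟨p1, x1, e1⟩ := memL'_ex h1
      obtain ⟨p2, x2, e2⟩ := memL_ex h2
      rw [e1, e2]; simp only [fpot]; omega
    · obtain ⟨p1, x1, e1⟩ := memL_ex h1
      obtain ⟨p2, x2, e2⟩ := memL'_ex h2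
      rw [e1, e2]; simp only [fpot]; omega
    · obtain ⟨p1, x1, e1⟩ := memL_ex h1
      obtain ⟨p2, x2, e2⟩ := memL_ex h2
      rw [e1, e2]; simp only [fpot]; omega
    · obtain ⟨p1, x1, e1⟩ := memL_ex h1
      obtain ⟨p2, x2, e2⟩ := memL_ex h2
      rw [e1, e2]; simp only [fpot]; omega
  · -- ABack
    rcases h with ⟨i, t, p, x, p', x', hm, -, rfl, rfl, -⟩ |
      ⟨i, p, x, p', x', hmA, -, rfl, rfl, -⟩ | ⟨i, p, x, p', x', -, hmA, rfl, rfl, -⟩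
    · rcases hm with hm | hm
      · obtain ⟨p1, x1, e1⟩ := memL_ex hm
        rw [e1]; simp only [fpot]; omega
      · obtain ⟨p1, x1, e1⟩ := memL'_ex hm
        rw [e1]; simp only [fpot]; omega
    · have hb := memA_bounds hmA
      simp only [fpot]; omega
    · have hb := memA_bounds hmA
      simp only [fpot]; omega
  · -- BBack
    rcases h with ⟨i, t, p, x, p', x', -, hm, rfl, rfl, -⟩ |
      ⟨i, p, x, p', x', -, hmB, rfl, rfl, -⟩ | ⟨i, p, x, p', x', hmB, -, rfl, rfl, -⟩
    · rcases hm with hm | hm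
      · obtain ⟨p1, x1, e1⟩ := memL_ex hm
        rw [e1]; simp only [fpot]; omega
      · obtain ⟨p1, x1, e1⟩ := memL'_ex hm
        rw [e1]; simp only [fpot]; omega
    · have hb := memB_bounds hmB
      simp only [fpot]; omega
    · have hb := memB_bounds hmB
      simp only [fpot]; omega
  · -- BABack
    obtain ⟨i, h4, -, hmB, hmA⟩ := h
    obtain ⟨p1, x1, e1⟩ := memB_ex hmB
    obtain ⟨p2, x2, e2⟩ := memA_ex hmA
    rw [e1, e2]; simp only [fpot]; omega
  · -- FixedE
    rcases h with ⟨-, rfl⟩ | ⟨rfl, h2⟩ | ⟨h1, rfl⟩ | ⟨rfl, h2⟩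
    · simp only [fpot]; omega
    · rcases h2 with h2 | h2 <;>
        · obtain ⟨p1, x1, e1⟩ := memL_ex h2
          rw [e1]; simp only [fpot]; omega
    · rcases h1 with h1 | h1 <;>
        · obtain ⟨p1, x1, e1⟩ := memL_ex h1
          rw [e1]; simp only [fpot]; omega
    · obtain ⟨p1, x1, e1⟩ := memL'_ex h2
      rw [e1]; simp only [fpot]; omega

/-- Along a walk, the potential grows by at most 4 per step. -/
lemma walk_le {k d : ℕ} {S : Finset (Vec d)} (hk : 5 ≤ k) {P : ℕ → Vert k d} {n : ℕ}
    (hP : IsWalk (Adj k d S) P n) :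
    ∀ m t, t + m ≤ n → fpot k d (P (t + m)) ≤ fpot k d (P t) + 4 * m := by
  intro m
  induction m with
  | zero => intro t _; simp
  | succ m ih =>
      intro t h
      have h1 : Adj k d S (P (t + m)) (P (t + m + 1)) := hP _ (by omega)
      have h2 := fstep hk h1
      have h3 := ih t (by omega)
      have he : t + (m + 1) = t + m + 1 := by omega
      rw [he]; omega

/-- The only edges out of `u` go to `L'_4`. -/
lemma out_u {k d : ℕ} {S : Finset (Vec d)} {β : Vert k d}
    (h : Adj k d S Vert.uu β) : β ∈ setL' k d S 4 := by
  rcases h with h | h | h | h | h | h | h | h | h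
  · rcases h with ⟨_, _, _, _, _, -, -, e, -⟩ | ⟨_, _, _, _, e, -⟩ | ⟨_, _, _, _, e, -⟩ <;>
      simp at e
  · rcases h with ⟨_, _, _, _, _, -, -, -, e, -⟩ | ⟨_, _, _, _, -, e, -⟩ |
      ⟨_, _, _, _, -, e, -⟩ <;> simp at e
  · obtain ⟨_, _, _, _, _, -, -, e, -⟩ := h; simp at e
  · obtain ⟨_, _, _, _, _, -, -, -, e, -⟩ := h; simp at e
  · obtain ⟨_, _, _, _, _, e, -⟩ := h; simp at e
  · rcases h with ⟨_, _, _, _, _, _, -, -, e, -⟩ | ⟨_, _, _, _, _, -, -, e, -⟩ |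
      ⟨_, _, _, _, _, -, -, e, -⟩ <;> simp at e
  · rcases h with ⟨_, _, _, _, _, _, -, -, e, -⟩ | ⟨_, _, _, _, _, -, -, e, -⟩ |
      ⟨_, _, _, _, _, -, -, e, -⟩ <;> simp at e
  · obtain ⟨i, -, -, hB, -⟩ := h
    obtain ⟨p, x, e⟩ := memB_ex hB; simp at e
  · rcases h with ⟨h1, -⟩ | ⟨e, -⟩ | ⟨h1, -⟩ | ⟨-, h2⟩
    · obtain ⟨p, x, e⟩ := memL'_ex h1; simp at e
    · simp at e
    · rcases h1 with h1 | h1 <;>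
        · obtain ⟨p, x, e⟩ := memL_ex h1; simp at e
    · exact h2

/-- The only edges into `v` come from `L'_{k-2}`. -/
lemma in_v {k d : ℕ} {S : Finset (Vec d)} {α : Vert k d}
    (h : Adj k d S α Vert.vv) : α ∈ setL' k d S (k - 2) := by
  rcases h with h | h | h | h | h | h | h | h | h
  · rcases h with ⟨_, _, _, _, _, -, -, -, e, -⟩ | ⟨_, _, _, _, -, e, -⟩ |
      ⟨_, _, _, _, -, e, -⟩ <;> simp at e
  · rcases h with ⟨_, _, _, _, _, -, -, e, -⟩ | ⟨_, _, _, _, e, -⟩ | ⟨_, _, _, _, e, -⟩ <;>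
      simp at e
  · obtain ⟨_, _, _, _, _, -, -, -, e, -⟩ := h; simp at e
  · obtain ⟨_, _, _, _, _, -, -, e, -⟩ := h; simp at e
  · obtain ⟨_, _, _, _, _, -, e, -⟩ := h; simp at e
  · rcases h with ⟨_, _, _, _, _, _, -, -, -, e, -⟩ | ⟨_, _, _, _, _, -, -, -, e, -⟩ |
      ⟨_, _, _, _, _, -, -, -, e, -⟩ <;> simp at e
  · rcases h with ⟨_, _, _, _, _, _, -, -, -, e, -⟩ | ⟨_, _, _, _, _, -, -, -, e, -⟩ |
      ⟨_, _, _, _, _, -, -, -, e, -⟩ <;> simp at e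
  · obtain ⟨i, -, -, -, hA⟩ := h
    obtain ⟨p, x, e⟩ := memA_ex hA; simp at e
  · rcases h with ⟨h1, -⟩ | ⟨-, h2⟩ | ⟨-, e⟩ | ⟨-, h2⟩
    · exact h1
    · rcases h2 with h2 | h2 <;>
        · obtain ⟨p, x, e⟩ := memL_ex h2; simp at e
    · simp at e
    · obtain ⟨p, x, e⟩ := memL'_ex h2; simp at e

/-- The only edges out of `A_i`, `i ≤ k-2`, go to `L'_4`. -/
lemma out_A {k d : ℕ} {S : Finset (Vec d)} {i : ℕ} (hk : 5 ≤ k) {α β : Vert k d}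
    (hα : α ∈ setA k d S i) (hik : i ≤ k - 2) (h : Adj k d S α β) :
    β ∈ setL' k d S 4 := by
  obtain ⟨p0, x0, e0⟩ := memA_ex hα
  subst e0
  rcases h with h | h | h | h | h | h | h | h | h
  · rcases h with ⟨_, _, _, _, _, -, -, e, -⟩ | ⟨_, _, _, _, e, -⟩ | ⟨_, _, _, _, e, -⟩ <;>
      simp at e
  · rcases h with ⟨_, _, _, _, _, -, -, -, e, -⟩ | ⟨_, _, _, _, -, e, -⟩ |
      ⟨_, _, _, _, -, e, -⟩ <;> simp at e
  · obtain ⟨_, _, _, _, _, -, -, e, -⟩ := h; simp at e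
  · obtain ⟨_, _, _, _, _, -, -, -, e, -⟩ := h; simp at e
  · obtain ⟨t, t', p, x, x', -, -, -, hd⟩ := h
    rcases hd with ⟨j, h1, -⟩ | ⟨j, h1, -⟩ | ⟨j, h1, -⟩ | ⟨h1, -⟩ | ⟨h1, -⟩
    · obtain ⟨p1, x1, e⟩ := memL'_ex h1; simp at e
    · obtain ⟨p1, x1, e⟩ := memL'_ex h1; simp at e
    · obtain ⟨p1, x1, e⟩ := memL_ex h1; simp at e
    · obtain ⟨p1, x1, e⟩ := memL_ex h1; simp at e
    · obtain ⟨p1, x1, e⟩ := memL_ex h1; simp at e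
  · rcases h with ⟨j, t, p, x, p', x', hm, -, -, -, -⟩ |
      ⟨j, p, x, p', x', -, hmL4, -, -, -⟩ | ⟨j, p, x, p', x', hm1, -, e, -⟩
    · rcases hm with hm | hm
      · obtain ⟨p1, x1, e⟩ := memL_ex hm; simp at e
      · obtain ⟨p1, x1, e⟩ := memL'_ex hm; simp at e
    · exact hmL4
    · simp only [Vert.node.injEq, Tag.A.injEq] at e
      obtain ⟨hi, -, -⟩ := e
      omega
  · rcases h with ⟨j, t, p, x, p', x', -, -, e, -⟩ | ⟨j, p, x, p', x', -, -, e, -⟩ |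
      ⟨j, p, x, p', x', -, -, e, -⟩ <;> simp at e
  · obtain ⟨j, -, -, hmB, -⟩ := h
    obtain ⟨p, x, e⟩ := memB_ex hmB; simp at e
  · rcases h with ⟨h1, -⟩ | ⟨e, -⟩ | ⟨h1, -⟩ | ⟨e, -⟩
    · obtain ⟨p, x, e⟩ := memL'_ex h1; simp at e
    · simp at e
    · rcases h1 with h1 | h1 <;>
        · obtain ⟨p, x, e⟩ := memL_ex h1; simp at e
    · simp at e

/-- Entering `L'_{k-2} ∪ B` from outside (and not from `u`) is only possible from a
vertex of potential at least `4(k-2)`, and lands in `L'_{k-2}`. -/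
lemma in_W {k d : ℕ} {S : Finset (Vec d)} (hk : 5 ≤ k) {α β : Vert k d}
    (h : Adj k d S α β)
    (hβ : β ∈ setL' k d S (k - 2) ∨ β ∈ setBall k d S)
    (hα1 : α ∉ setL' k d S (k - 2)) (hα2 : α ∉ setBall k d S) (hαu : α ≠ Vert.uu) :
    β ∈ setL' k d S (k - 2) ∧ 4 * (k - 2) ≤ fpot k d α := by
  have hβform : (∃ p x, β = Vert.node (Tag.L' (k - 2)) p x) ∨
      (∃ j p x, β = Vert.node (Tag.B j) p x) := by
    rcases hβ with hβ | hβ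
    · exact Or.inl (memL'_ex hβ)
    · obtain ⟨j, hβ⟩ := Set.mem_iUnion.mp hβ
      obtain ⟨p, x, e⟩ := memB_ex hβ
      exact Or.inr ⟨j, p, x, e⟩
  rcases h with h | h | h | h | h | h | h | h | h
  · -- SwapE α β : β has tag L
    rcases h with ⟨_, _, _, _, _, -, -, -, rfl, -⟩ | ⟨_, _, _, _, -, rfl, -⟩ |
      ⟨_, _, _, _, -, rfl, -⟩ <;>
      rcases hβform with ⟨_, _, e⟩ | ⟨_, _, _, e⟩ <;> simp at e
  · -- SwapE β α : β has tag L
    rcases h with ⟨_, _, _, _, _, -, -, rfl, -⟩ | ⟨_, _, _, _, rfl, -⟩ |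
      ⟨_, _, _, _, rfl, -⟩ <;>
      rcases hβform with ⟨_, _, e⟩ | ⟨_, _, _, e⟩ <;> simp at e
  · -- VecE α β
    obtain ⟨i, p, x, p', x', -, -, rfl, rfl, hmL, hmL', -⟩ := h
    rcases hβform with ⟨p2, x2, e⟩ | ⟨j, p2, x2, e⟩
    · simp only [Vert.node.injEq, Tag.L'.injEq] at e
      obtain ⟨hi, -, -⟩ := e
      subst hi
      exact ⟨hmL', by simp only [fpot]; omega⟩
    · simp at e
  · -- VecE β α : β has tag L
    obtain ⟨i, p, x, p', x', -, -, rfl, -⟩ := h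
    rcases hβform with ⟨_, _, e⟩ | ⟨_, _, _, e⟩ <;> simp at e
  · -- CoordE
    obtain ⟨t, t', p, x, x', rfl, rfl, -, hd⟩ := h
    rcases hd with ⟨i, h1, h2⟩ | ⟨i, h1, h2⟩ | ⟨i, h1, h2⟩ | ⟨h1, h2⟩ | ⟨h1, h2⟩
    · obtain ⟨p2, x2, e2⟩ := memL'_ex h2
      rcases hβform with ⟨p3, x3, e3⟩ | ⟨j, p3, x3, e3⟩
      · have e := e2.symm.trans e3
        simp only [Vert.node.injEq, Tag.L'.injEq] at e
        obtain ⟨hi, -, -⟩ := e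
        subst hi
        exact absurd h1 hα1
      · have e := e2.symm.trans e3
        simp at e
    · obtain ⟨p2, x2, e2⟩ := memL_ex h2
      rcases hβform with ⟨_, _, e3⟩ | ⟨_, _, _, e3⟩ <;>
        · have e := e2.symm.trans e3; simp at e
    · obtain ⟨p2, x2, e2⟩ := memL'_ex h2
      rcases hβform with ⟨p3, x3, e3⟩ | ⟨j, p3, x3, e3⟩
      · have e := e2.symm.trans e3
        simp only [Vert.node.injEq, Tag.L'.injEq] at e
        obtain ⟨hi, -, -⟩ := e
        subst hi
        obtain ⟨p1, x1, e1⟩ := memL_ex h1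
        refine ⟨h2, ?_⟩
        rw [e1]; simp only [fpot]; omega
      · have e := e2.symm.trans e3
        simp at e
    · obtain ⟨p2, x2, e2⟩ := memL_ex h2
      rcases hβform with ⟨_, _, e3⟩ | ⟨_, _, _, e3⟩ <;>
        · have e := e2.symm.trans e3; simp at e
    · obtain ⟨p2, x2, e2⟩ := memL_ex h2
      rcases hβform with ⟨_, _, e3⟩ | ⟨_, _, _, e3⟩ <;>
        · have e := e2.symm.trans e3; simp at e
  · -- ABack
    rcases h with ⟨i, t, p, x, p', x', -, -, -, rfl, -⟩ |
      ⟨i, p, x, p', x', hmA, hmL4, rfl, rfl, -⟩ | ⟨i, p, x, p', x', -, -, -, rfl, -⟩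
    · rcases hβform with ⟨_, _, e⟩ | ⟨_, _, _, e⟩ <;> simp at e
    · rcases hβform with ⟨p3, x3, e3⟩ | ⟨j, p3, x3, e3⟩
      · simp only [Vert.node.injEq, Tag.L'.injEq] at e3
        obtain ⟨h4, -, -⟩ := e3
        have hb := memA_bounds hmA
        constructor
        · rw [← h4]; exact hmL4
        · simp only [fpot]; omega
      · simp at e3
    · rcases hβform with ⟨_, _, e⟩ | ⟨_, _, _, e⟩ <;> simp at e
  · -- BBack
    rcases h with ⟨i, t, p, x, p', x', hmB, -, -, -, -⟩ |
      ⟨i, p, x, p', x', hmL', -, -, -, -⟩ | ⟨i, p, x, p', x', hmB, -, -, -, -⟩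
    · exact absurd (Set.mem_iUnion.mpr ⟨i, hmB⟩) hα2
    · exact absurd hmL' hα1
    · exact absurd (Set.mem_iUnion.mpr ⟨i, hmB⟩) hα2
  · -- BABack
    obtain ⟨i, -, -, hmB, -⟩ := h
    exact absurd (Set.mem_iUnion.mpr ⟨i, hmB⟩) hα2
  · -- FixedE
    rcases h with ⟨-, rfl⟩ | ⟨rfl, h2⟩ | ⟨-, rfl⟩ | ⟨rfl, -⟩
    · rcases hβform with ⟨_, _, e⟩ | ⟨_, _, _, e⟩ <;> simp at e
    · rcases h2 with h2 | h2 <;>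
        · obtain ⟨p2, x2, e2⟩ := memL_ex h2
          rcases hβform with ⟨_, _, e3⟩ | ⟨_, _, _, e3⟩ <;>
            · have e := e2.symm.trans e3; simp at e
    · rcases hβform with ⟨_, _, e⟩ | ⟨_, _, _, e⟩ <;> simp at e
    · exact absurd rfl hαu


/-- **Section 5, intermediate claims.**  Let
`α = (a_1, …, a_{k-1}) ∈ L_1` and `β = (a_2, …, a_k) ∈ L_{k+1}`, and let `P` be a
directed path in `G` from `α` to `β`.  If `P` contains the vertex `u` or the vertex
`v`, or if `P` contains a `ba`-type back edge, then the length of `P` is at least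
`2k-1`. -/
theorem detour_paths_long (k d : ℕ) (hk : 5 ≤ k) (hd : 1 ≤ d)
    (S : Finset (Vec d)) (hone : ones d ∈ S)
    (a : Fin k → Vec d) (ha : ∀ j, a j ∈ S)
    (P : ℕ → Vert k d) (n : ℕ) (hP : IsWalk (Adj k d S) P n)
    (h0 : P 0 = Vert.node (Tag.L 1)
      (fun j => if (j : ℕ) < k - 1 then some (a j) else none) (fun _ => ⟨0, hd⟩))
    (hn : P n = Vert.node (Tag.L (k + 1))
      (fun j => if 1 ≤ (j : ℕ) then some (a j) else none) (fun _ => ⟨0, hd⟩))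
    (hdetour : (∃ t ≤ n, P t = Vert.uu ∨ P t = Vert.vv) ∨
      (∃ t, t < n ∧ BABack k d S (P t) (P (t + 1)))) :
    2 * k - 1 ≤ n := by
  classical
  have hf0 : fpot k d (P 0) = 4 := by rw [h0]; simp [fpot]
  have hfn : fpot k d (P n) = 4 * (k + 1) := by rw [hn]; simp [fpot]
  have key : ∀ t, t ≤ n → fpot k d (P t) ≤ 4 + 4 * t := by
    intro t ht
    have := walk_le hk hP t 0 (by omega)
    rw [Nat.zero_add, hf0] at this
    omega
  have key2 : ∀ t, t ≤ n → 4 * (k + 1) ≤ fpot k d (P t) + 4 * (n - t) := by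
    intro t ht
    have := walk_le hk hP (n - t) t (by omega)
    rw [show t + (n - t) = n by omega, hfn] at this
    omega
  by_cases hu : ∃ t ≤ n, P t = Vert.uu
  · obtain ⟨t, htn, htu⟩ := hu
    have h1 : 4 * k + 4 ≤ 4 + 4 * t := by
      have := key t htn
      rw [htu] at this
      simpa [fpot] using this
    have htn' : t < n := by
      rcases Nat.lt_or_ge t n with h | h
      · exact h
      · exfalso
        have : t = n := by omega
        rw [this, hn] at htu
        cases htu
    have hadj : Adj k d S Vert.uu (P (t + 1)) := by
      have := hP t htn'
      rwa [htu] at this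
    obtain ⟨pb, xb, hb⟩ := memL'_ex (out_u hadj)
    have h3 := key2 (t + 1) (by omega)
    rw [hb] at h3
    simp only [fpot] at h3
    omega
  · push_neg at hu
    have hP0W : ¬ (P 0 ∈ setL' k d S (k - 2) ∨ P 0 ∈ setBall k d S) := by
      rintro (hw | hw)
      · obtain ⟨p, x, e⟩ := memL'_ex hw
        rw [h0] at e; simp at e
      · obtain ⟨j, hw⟩ := Set.mem_iUnion.mp hw
        obtain ⟨p, x, e⟩ := memB_ex hw
        rw [h0] at e; simp at e
    have minlem : ∀ t0, t0 ≤ n →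
        (P t0 ∈ setL' k d S (k - 2) ∨ P t0 ∈ setBall k d S) →
        ∃ s, s ≤ t0 ∧ k - 2 ≤ s ∧ P s ∈ setL' k d S (k - 2) := by
      intro t0 ht0 hW
      have hex : ∃ s, (P s ∈ setL' k d S (k - 2) ∨ P s ∈ setBall k d S) := ⟨t0, hW⟩
      have hs : P (Nat.find hex) ∈ setL' k d S (k - 2) ∨
          P (Nat.find hex) ∈ setBall k d S := Nat.find_spec hex
      set s := Nat.find hex with hsdef
      have hst : s ≤ t0 := Nat.find_le hW
      have hs1 : 1 ≤ s := by
        rcases Nat.eq_zero_or_pos s with h | h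
        · exfalso; rw [h] at hs; exact hP0W hs
        · exact h
      have hmin : ¬ (P (s - 1) ∈ setL' k d S (k - 2) ∨ P (s - 1) ∈ setBall k d S) :=
        Nat.find_min hex (by omega)
      rw [not_or] at hmin
      have hedge : Adj k d S (P (s - 1)) (P s) := by
        have := hP (s - 1) (by omega)
        rwa [show s - 1 + 1 = s by omega] at this
      have hW2 := in_W hk hedge hs hmin.1 hmin.2 (hu (s - 1) (by omega))
      have hkey := key (s - 1) (by omega)
      exact ⟨s, hst, by omega, hW2.1⟩
    rcases hdetour with ⟨t, htn, htv⟩ | ⟨t, htn, hba⟩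
    · rcases htv with htu | htv
      · exact absurd htu (hu t htn)
      · have ht1 : 1 ≤ t := by
          rcases Nat.eq_zero_or_pos t with h | h
          · exfalso; rw [h, h0] at htv; cases htv
          · exact h
        have hedge : Adj k d S (P (t - 1)) Vert.vv := by
          have := hP (t - 1) (by omega)
          rwa [show t - 1 + 1 = t by omega, htv] at this
        have hL' := in_v hedge
        obtain ⟨s, hst, hsk, -⟩ := minlem (t - 1) (by omega) (Or.inl hL')
        have h3 := key2 t htn
        rw [htv] at h3
        simp only [fpot] at h3
        omega
    · obtain ⟨i, hi4, hik, hB, hA⟩ := hba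
      have hBall : P t ∈ setBall k d S := Set.mem_iUnion.mpr ⟨i, hB⟩
      obtain ⟨s, hst, hsk, hsL'⟩ := minlem t (by omega) (Or.inr hBall)
      have hts : s ≠ t := by
        intro he
        rw [he] at hsL'
        obtain ⟨p1, x1, e1⟩ := memL'_ex hsL'
        obtain ⟨p2, x2, e2⟩ := memB_ex hB
        have e := e1.symm.trans e2
        simp at e
      have ht1n : t + 1 < n := by
        rcases Nat.lt_or_ge (t + 1) n with h | h
        · exact h
        · exfalso
          have he : t + 1 = n := by omega
          obtain ⟨p1, x1, e1⟩ := memA_ex hA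
          rw [he, hn] at e1
          simp at e1
      have hL4 := out_A hk hA (by omega) (hP (t + 1) ht1n)
      obtain ⟨pb, xb, hb⟩ := memL'_ex hL4
      have h3 := key2 (t + 1 + 1) (by omega)
      rw [hb] at h3
      simp only [fpot] at h3
      omega

end DiamLB
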